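/- For any skew-symmetric matrices X, Y ∈ ℝ^{d×d}, the matrix exponential is 1-Lipschitz in Frobenius norm: ‖exp(X) − exp(Y)‖_F ≤ ‖X − Y‖_F. -/

import Mathlib

open MeasureTheory Matrix Real RealInnerProductSpace

noncomputable def frobNorm {d : ℕ} (A : Matrix (Fin d) (Fin d) ℝ) : ℝ :=
  Real.sqrt (∑ i, ∑ j, A i j ^ 2)

noncomputable def nuclearNorm {d : ℕ} (A : Matrix (Fin d) (Fin d) ℝ) : ℝ :=
  ∑ i, Real.sqrt ((show (Aᵀ * A).IsHermitian from Matrix.isHermitian_conjTranspose_mul_self A).eigenvalues i)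

/-- `μ` is the uniform (rotation-invariant) probability distribution on the unit
sphere `S^{d-1} ⊂ ℝ^d`. -/
def IsUniformOnSphere {d : ℕ} (μ : Measure (EuclideanSpace ℝ (Fin d))) : Prop :=
  IsProbabilityMeasure μ ∧ (∀ᵐ x ∂μ, ‖x‖ = 1) ∧
  ∀ Q : Matrix (Fin d) (Fin d) ℝ, Qᵀ * Q = 1 →
    Measure.map (fun x => Matrix.toEuclideanLin Q x) μ = μ

/-- The Beta function. -/
noncomputable def Beta (m n : ℝ) : ℝ := Real.Gamma m * Real.Gamma n / Real.Gamma (m + n)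

noncomputable def ptilde (d : ℕ) : ℝ :=
  (1 + Beta ((d : ℝ) - 1) (1/2) / Beta (((d : ℝ) - 1)/2) (1/2))⁻¹

def A2 : Matrix (Fin 2) (Fin 2) ℝ := !![0, -1; 1, 0]

noncomputable def rot2 (θ : ℝ) : Matrix (Fin 2) (Fin 2) ℝ :=
  !![Real.cos θ, -Real.sin θ; Real.sin θ, Real.cos θ]


section aux
open scoped Matrix
attribute [local instance] Matrix.frobeniusNormedAddCommGroup Matrix.frobeniusNormedRing
  Matrix.frobeniusNormedSpace Matrix.frobeniusNormedAlgebra Matrix.frobeniusIsBoundedSMul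

variable {d : ℕ}

lemma frob_sq_eq (A : Matrix (Fin d) (Fin d) ℝ) :
    ‖A‖ ^ 2 = Matrix.trace (Aᵀ * A) := by
  rw [Matrix.frobenius_norm_def, ← Real.rpow_natCast _ 2, ← Real.rpow_mul (by positivity)]
  norm_num
  rw [Matrix.trace]
  simp only [Matrix.diag, Matrix.mul_apply, Matrix.transpose_apply]
  rw [Finset.sum_comm]
  congr 1
  ext i
  congr 1
  ext j
  ring

lemma frob_mul_orth_left (Q A : Matrix (Fin d) (Fin d) ℝ) (hQ : Qᵀ * Q = 1) :
    ‖Q * A‖ = ‖A‖ := by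
  have h : ‖Q * A‖ ^ 2 = ‖A‖ ^ 2 := by
    rw [frob_sq_eq, frob_sq_eq, Matrix.transpose_mul, Matrix.mul_assoc,
      ← Matrix.mul_assoc Qᵀ, hQ, Matrix.one_mul]
  rw [← Real.sqrt_sq (norm_nonneg (Q * A)), ← Real.sqrt_sq (norm_nonneg A), h]

lemma frob_mul_orth_right (A R : Matrix (Fin d) (Fin d) ℝ) (hR : Rᵀ * R = 1) :
    ‖A * R‖ = ‖A‖ := by
  have hR' : R * Rᵀ = 1 := mul_eq_one_comm.mp hR
  have h : ‖A * R‖ ^ 2 = ‖A‖ ^ 2 := by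
    rw [frob_sq_eq, frob_sq_eq, Matrix.transpose_mul, Matrix.mul_assoc,
      Matrix.trace_mul_comm, Matrix.mul_assoc, Matrix.mul_assoc, hR', Matrix.mul_one,
      Matrix.trace_mul_comm]
  rw [← Real.sqrt_sq (norm_nonneg (A * R)), ← Real.sqrt_sq (norm_nonneg A), h]

lemma orth_of_skew {A : Matrix (Fin d) (Fin d) ℝ} (hA : Aᵀ = -A) :
    (NormedSpace.exp A)ᵀ * NormedSpace.exp A = 1 := by
  rw [← Matrix.exp_transpose, hA, ← Matrix.exp_add_of_commute (-A) A (Commute.neg_left rfl)]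
  simp [NormedSpace.exp_zero]

lemma key {d : ℕ} (X Y : Matrix (Fin d) (Fin d) ℝ) (hX : Xᵀ = -X) (hY : Yᵀ = -Y) :
    ‖NormedSpace.exp X - NormedSpace.exp Y‖ ≤ ‖X - Y‖ := by
  set f : ℝ → Matrix (Fin d) (Fin d) ℝ :=
    fun t => NormedSpace.exp (t • X) * NormedSpace.exp ((1 - t) • Y) with hf
  set f' : ℝ → Matrix (Fin d) (Fin d) ℝ :=
    fun t => NormedSpace.exp (t • X) * (X - Y) * NormedSpace.exp ((1 - t) • Y) with hf'
  have hskewX : ∀ t : ℝ, (t • X)ᵀ = -(t • X) := by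
    intro t; rw [Matrix.transpose_smul, hX, smul_neg]
  have hskewY : ∀ t : ℝ, (t • Y)ᵀ = -(t • Y) := by
    intro t; rw [Matrix.transpose_smul, hY, smul_neg]
  have hderiv : ∀ t : ℝ, HasDerivAt f (f' t) t := by
    intro t
    have hu : HasDerivAt (fun t : ℝ => NormedSpace.exp (t • X))
        (NormedSpace.exp (t • X) * X) t := hasDerivAt_exp_smul_const X t
    have hv0 : HasDerivAt (fun s : ℝ => NormedSpace.exp (s • Y))
        (NormedSpace.exp ((1 - t) • Y) * Y) (1 - t) := hasDerivAt_exp_smul_const Y (1 - t)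
    have hg : HasDerivAt (fun t : ℝ => 1 - t) (-1) t := by
      simpa using (hasDerivAt_id t).const_sub 1
    have hv : HasDerivAt (fun t : ℝ => NormedSpace.exp ((1 - t) • Y))
        ((-1 : ℝ) • (NormedSpace.exp ((1 - t) • Y) * Y)) t := hv0.scomp t hg
    have := hu.mul hv
    refine this.congr_deriv ?_
    have hcomm : NormedSpace.exp ((1 - t) • Y) * Y = Y * NormedSpace.exp ((1 - t) • Y) :=
      ((Commute.refl Y).smul_left (1 - t)).exp_left |>.eq
    rw [hf']
    simp only [neg_one_smul, mul_neg]
    rw [hcomm]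
    noncomm_ring
  have hbound : ∀ t : ℝ, ‖f' t‖ ≤ ‖X - Y‖ := by
    intro t
    rw [hf']
    rw [frob_mul_orth_right _ _ (orth_of_skew (by simpa using hskewY (1 - t))),
      frob_mul_orth_left _ _ (orth_of_skew (hskewX t))]
  have := Convex.norm_image_sub_le_of_norm_hasDerivWithin_le
    (f := f) (f' := f') (C := ‖X - Y‖) (s := Set.univ)
    (fun x _ => (hderiv x).hasDerivWithinAt) (fun x _ => hbound x)
    convex_univ (Set.mem_univ (0 : ℝ)) (Set.mem_univ (1 : ℝ))
  have hf1 : f 1 = NormedSpace.exp X := by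
    simp [hf, NormedSpace.exp_zero]
  have hf0 : f 0 = NormedSpace.exp Y := by
    simp [hf, NormedSpace.exp_zero]
  rw [hf1, hf0] at this
  simpa using this

lemma frobNorm_eq_norm (A : Matrix (Fin d) (Fin d) ℝ) :
    Real.sqrt (∑ i, ∑ j, A i j ^ 2) = ‖A‖ := by
  rw [Matrix.frobenius_norm_def, Real.sqrt_eq_rpow]
  congr 1
  congr 1
  ext i
  congr 1
  ext j
  simp [Real.norm_eq_abs, sq_abs]

end aux

theorem stmt9 {d : ℕ} (X Y : Matrix (Fin d) (Fin d) ℝ) (hX : Xᵀ = -X) (hY : Yᵀ = -Y) :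
    frobNorm (NormedSpace.exp X - NormedSpace.exp Y) ≤ frobNorm (X - Y) := by
  rw [frobNorm, frobNorm, frobNorm_eq_norm, frobNorm_eq_norm]
  exact key X Y hX hY
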